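/- Let D = ϖ_w(y) for some y ∈ 𝔽_q^n. Then the following are equivalent: (1) diam_{d_w}(B_w(x, D)) = D for all x ∈ 𝔽_q^n; (2) B_w(x, D) is D-optimal for all x ∈ 𝔽_q^n; (3) every D-optimal set A equals B_w(x, D) for some x ∈ 𝔽_q^n; (4) A*_{d_w}(D) = |B_w(0, D)|. -/

import Mathlib

set_option linter.unusedSectionVars false

open scoped Classical

noncomputable section

variable {F : Type*} [Field F] [Fintype F]

def IsWeight (w : F → ℕ) : Prop :=
  (∀ a : F, w a = 0 ↔ a = 0) ∧ (∀ a : F, w (-a) = w a) ∧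
    (∀ a b : F, w (a + b) ≤ w a + w b)

def Mw (w : F → ℕ) : ℕ := Finset.univ.sup w

def mw (w : F → ℕ) : ℕ := sInf {s | ∃ a : F, a ≠ 0 ∧ w a = s}

def rho {n : ℕ} (u : Fin n → F) : ℕ :=
  (Finset.univ.filter fun j => u j ≠ 0).sup fun j => (j : ℕ) + 1

lemma rho_le {n : ℕ} (u : Fin n → F) : rho u ≤ n :=
  Finset.sup_le fun j _ => j.isLt

def chainWeight {n : ℕ} (w : F → ℕ) (u : Fin n → F) : ℕ :=
  if h : rho u = 0 then 0
  else w (u ⟨rho u - 1,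
        lt_of_lt_of_le (Nat.sub_lt (Nat.pos_of_ne_zero h) Nat.one_pos) (rho_le u)⟩)
      + (rho u - 1) * Mw w

def dChain {n : ℕ} (w : F → ℕ) (u v : Fin n → F) : ℕ := chainWeight w (u - v)

def ballW {n : ℕ} (w : F → ℕ) (x : Fin n → F) (r : ℕ) : Finset (Fin n → F) :=
  Finset.univ.filter fun v => dChain w x v ≤ r

def diamW {n : ℕ} (w : F → ℕ) (A : Finset (Fin n → F)) : ℕ :=
  (A ×ˢ A).sup fun p => dChain w p.1 p.2

def AstarW (w : F → ℕ) (n D : ℕ) : ℕ :=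
  Finset.univ.sup fun A : Finset (Fin n → F) => if diamW w A ≤ D then A.card else 0

def winv (w : F → ℕ) (S : ℕ) : Finset F :=
  Finset.univ.filter fun a => a ≠ 0 ∧ w a ≤ S

def dP {n : ℕ} (C : Finset (Fin n → F)) : ℕ :=
  sInf {s | ∃ x ∈ C, ∃ y ∈ C, x ≠ y ∧ rho (x - y) = s}

def dW {n : ℕ} (w : F → ℕ) (C : Finset (Fin n → F)) : ℕ :=
  sInf {s | ∃ x ∈ C, ∃ y ∈ C, x ≠ y ∧ dChain w x y = s}

def floorW (w : F → ℕ) (n D : ℕ) : ℕ :=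
  (Finset.univ.filter fun u : Fin n → F => chainWeight w u < D).sup (chainWeight w)

def nonArch (w : F → ℕ) : Prop := ∀ a b : F, w (a + b) ≤ max (w a) (w b)

def Sw (w : F → ℕ) : ℕ :=
  if nonArch w then Mw w
  else sInf {s | ∃ a b : F, max (w a) (w b) < w (a - b) ∧ max (w a) (w b) = s}

def WwCond (w : F → ℕ) (S : ℕ) (K : Finset F) : Prop :=
  (∀ a ∈ K, Sw w ≤ w a ∧ w a ≤ S) ∧
  (∀ a ∈ K, ∀ b : F, w b ≤ Sw w - 1 → w (a - b) ≤ S) ∧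
  (∀ a ∈ K, ∀ b ∈ K, w (a - b) ≤ S)

def WwCard (w : F → ℕ) (S : ℕ) : ℕ :=
  Finset.univ.sup fun K : Finset F => if WwCond w S K then K.card else 0

def idealOf {n : ℕ} (P : PartialOrder (Fin n)) (u : Fin n → F) : Finset (Fin n) :=
  Finset.univ.filter fun j => ∃ i : Fin n, u i ≠ 0 ∧ P.le j i

def maxOf {n : ℕ} (P : PartialOrder (Fin n)) (u : Fin n → F) : Finset (Fin n) :=
  (idealOf P u).filter fun j => ∀ k ∈ idealOf P u, P.le j k → j = k

def posetWeight {n : ℕ} (P : PartialOrder (Fin n)) (w : F → ℕ) (u : Fin n → F) : ℕ :=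
  (∑ i ∈ maxOf P u, w (u i)) + Mw w * ((idealOf P u) \ (maxOf P u)).card

def dPoset {n : ℕ} (P : PartialOrder (Fin n)) (w : F → ℕ) (u v : Fin n → F) : ℕ :=
  posetWeight P w (u - v)

def ballP {n : ℕ} (P : PartialOrder (Fin n)) (w : F → ℕ) (x : Fin n → F) (r : ℕ) :
    Finset (Fin n → F) :=
  Finset.univ.filter fun v => dPoset P w x v ≤ r

def diamP {n : ℕ} (P : PartialOrder (Fin n)) (w : F → ℕ) (A : Finset (Fin n → F)) : ℕ :=
  (A ×ˢ A).sup fun p => dPoset P w p.1 p.2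

end

section aux
variable {F : Type*} [Field F] [Fintype F] {n : ℕ}

lemma rho_neg' (u : Fin n → F) : rho (-u) = rho u := by
  unfold rho; congr 1; ext j; simp

lemma rho_zero' : rho (0 : Fin n → F) = 0 := by simp [rho]

lemma chainWeight_zero' (w : F → ℕ) : chainWeight w (0 : Fin n → F) = 0 := by
  rw [chainWeight, dif_pos rho_zero']

lemma chainWeight_neg' (w : F → ℕ) (hw : IsWeight w) (u : Fin n → F) :
    chainWeight w (-u) = chainWeight w u := by
  unfold chainWeight
  simp only [rho_neg']
  split
  · rfl
  · simp [Pi.neg_apply, hw.2.1]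

lemma dChain_shift (w : F → ℕ) (a b c : Fin n → F) :
    dChain w (a + c) (b + c) = dChain w a b := by
  simp [dChain, show a + c - (b + c) = a - b by ring]

lemma ballW_eq_image (w : F → ℕ) (x c : Fin n → F) (D : ℕ) :
    ballW w (x + c) D = (ballW w x D).image (fun v => v + c) := by
  ext v
  simp only [ballW, Finset.mem_filter, Finset.mem_univ, true_and, Finset.mem_image]
  constructor
  · intro h
    exact ⟨v - c, by simpa [dChain, show x - (v - c) = x + c - v by ring] using h,
      by ring⟩
  · rintro ⟨u, hu, rfl⟩
    simpa [dChain, show x + c - (u + c) = x - u by ring] using hu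

lemma card_ballW (w : F → ℕ) (x : Fin n → F) (D : ℕ) :
    (ballW w x D).card = (ballW w (0 : Fin n → F) D).card := by
  have := ballW_eq_image w 0 x D
  rw [zero_add] at this
  rw [this, Finset.card_image_of_injective _ (add_left_injective x)]

lemma diamW_image (w : F → ℕ) (A : Finset (Fin n → F)) (c : Fin n → F) :
    diamW w (A.image (fun v => v + c)) = diamW w A := by
  unfold diamW
  apply le_antisymm
  · apply Finset.sup_le
    rintro ⟨p1, p2⟩ hp
    simp only [Finset.mem_product, Finset.mem_image] at hp
    obtain ⟨⟨a, ha, rfl⟩, ⟨b, hb, rfl⟩⟩ := hp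
    simp only [dChain_shift]
    exact Finset.le_sup (f := fun p : (Fin n → F) × (Fin n → F) => dChain w p.1 p.2)
      (b := (a, b)) (Finset.mem_product.2 ⟨ha, hb⟩)
  · apply Finset.sup_le
    rintro ⟨p1, p2⟩ hp
    simp only [Finset.mem_product] at hp
    have : dChain w p1 p2 = dChain w (p1 + c) (p2 + c) := (dChain_shift w p1 p2 c).symm
    rw [this]
    exact Finset.le_sup (f := fun p : (Fin n → F) × (Fin n → F) => dChain w p.1 p.2)
      (b := (p1 + c, p2 + c))
      (Finset.mem_product.2 ⟨Finset.mem_image_of_mem _ hp.1, Finset.mem_image_of_mem _ hp.2⟩)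

lemma diamW_ballW (w : F → ℕ) (x : Fin n → F) (D : ℕ) :
    diamW w (ballW w x D) = diamW w (ballW w (0 : Fin n → F) D) := by
  have := ballW_eq_image w 0 x D
  rw [zero_add] at this
  rw [this, diamW_image]

lemma subset_ballW (w : F → ℕ) {D : ℕ} {A : Finset (Fin n → F)}
    (hA : diamW w A ≤ D) {a : Fin n → F} (ha : a ∈ A) : A ⊆ ballW w a D := by
  intro v hv
  simp only [ballW, Finset.mem_filter, Finset.mem_univ, true_and]
  exact le_trans (Finset.le_sup (f := fun p : (Fin n → F) × (Fin n → F) => dChain w p.1 p.2)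
    (b := (a, v)) (Finset.mem_product.2 ⟨ha, hv⟩)) hA

lemma AstarW_le_card (w : F → ℕ) (n D : ℕ) :
    AstarW w n D ≤ (ballW w (0 : Fin n → F) D).card := by
  apply Finset.sup_le
  intro A _
  split_ifs with h
  · rcases A.eq_empty_or_nonempty with rfl | ⟨a, ha⟩
    · simp
    · calc A.card ≤ (ballW w a D).card := Finset.card_le_card (subset_ballW w h ha)
        _ = _ := card_ballW w a D
  · exact Nat.zero_le _

lemma le_AstarW (w : F → ℕ) (n D : ℕ) {A : Finset (Fin n → F)} (hA : diamW w A ≤ D) :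
    A.card ≤ AstarW w n D := by
  have h2 : (if diamW w A ≤ D then A.card else 0) ≤ AstarW w n D :=
    Finset.le_sup (f := fun A : Finset (Fin n → F) =>
      if diamW w A ≤ D then A.card else 0) (Finset.mem_univ A)
  rwa [if_pos hA] at h2

lemma mem_self_ballW (w : F → ℕ) (x : Fin n → F) (D : ℕ) : x ∈ ballW w x D := by
  exact Finset.mem_filter.mpr ⟨Finset.mem_univ _, by
    show dChain w x x ≤ D
    rw [dChain, sub_self, chainWeight_zero' w]; exact Nat.zero_le _⟩

lemma AstarW_pos (w : F → ℕ) (n D : ℕ) : 1 ≤ AstarW w n D := by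
  have h : diamW w ({0} : Finset (Fin n → F)) ≤ D := by
    apply Finset.sup_le
    rintro ⟨p1, p2⟩ hp
    simp only [Finset.mem_product, Finset.mem_singleton] at hp
    obtain ⟨rfl, rfl⟩ := hp
    simp [dChain, chainWeight_zero' w]
  simpa using le_AstarW w n D h

lemma AstarW_attained (w : F → ℕ) (n D : ℕ) :
    ∃ A : Finset (Fin n → F), diamW w A ≤ D ∧ A.card = AstarW w n D := by
  obtain ⟨A, -, hA⟩ := Finset.exists_mem_eq_sup (Finset.univ : Finset (Finset (Fin n → F)))
    Finset.univ_nonempty (fun A : Finset (Fin n → F) => if diamW w A ≤ D then A.card else 0)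
  have hA' : AstarW w n D = if diamW w A ≤ D then A.card else 0 := hA
  by_cases h : diamW w A ≤ D
  · exact ⟨A, h, by rw [hA', if_pos h]⟩
  · exfalso
    have hp := AstarW_pos w n D
    rw [hA', if_neg h] at hp
    omega

end aux

theorem stmt7 {F : Type*} [Field F] [Fintype F] {n : ℕ} (hn : 1 ≤ n)
    (w : F → ℕ) (hw : IsWeight w) (D : ℕ)
    (hD : ∃ y : Fin n → F, chainWeight w y = D) :
    List.TFAE
      [∀ x : Fin n → F, diamW w (ballW w x D) = D,
       ∀ x : Fin n → F, diamW w (ballW w x D) ≤ D ∧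
         (ballW w x D).card = AstarW w n D,
       ∀ A : Finset (Fin n → F), diamW w A ≤ D → A.card = AstarW w n D →
         ∃ x : Fin n → F, A = ballW w x D,
       AstarW w n D = (ballW w (0 : Fin n → F) D).card] := by
  obtain ⟨y, hy⟩ := hD
  have hdiamlow : ∀ x : Fin n → F, diamW w (ballW w x D) ≤ D →
      diamW w (ballW w x D) = D := by
    intro x hle
    refine le_antisymm hle ?_
    have hxy : x + y ∈ ballW w x D := by
      simp only [ballW, Finset.mem_filter, Finset.mem_univ, true_and]
      have : x - (x + y) = -y := by ring
      rw [dChain, this, chainWeight_neg' w hw, hy]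
    have := Finset.le_sup (f := fun p : (Fin n → F) × (Fin n → F) => dChain w p.1 p.2)
      (b := (x, x + y)) (Finset.mem_product.2 ⟨mem_self_ballW w x D, hxy⟩)
    have hxyD : dChain w x (x + y) = D := by
      rw [dChain, show x - (x + y) = -y by ring, chainWeight_neg' w hw, hy]
    have h5 : dChain w x (x + y) ≤ diamW w (ballW w x D) := this
    rw [hxyD] at h5
    exact h5
  tfae_have 1 → 4
  | h1 => by
    refine le_antisymm (AstarW_le_card w n D) ?_
    exact le_AstarW w n D (le_of_eq (h1 0))
  tfae_have 4 → 2
  | h4 => by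
    have hpos : 1 ≤ AstarW w n D := AstarW_pos w n D
    obtain ⟨A, hAd, hAc⟩ := AstarW_attained w n D
    have hAne : A.Nonempty := Finset.card_pos.mp (by omega)
    obtain ⟨a, ha⟩ := hAne
    have hsub : A ⊆ ballW w a D := subset_ballW w hAd ha
    have hcard : (ballW w a D).card ≤ A.card := by
      rw [hAc, h4]; exact le_of_eq (card_ballW w a D)
    have hAeq : A = ballW w a D := Finset.eq_of_subset_of_card_le hsub hcard
    have hdiam0 : diamW w (ballW w (0 : Fin n → F) D) ≤ D := by
      rw [← diamW_ballW w a D, ← hAeq]; exact hAd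
    intro x
    refine ⟨by rw [diamW_ballW w x D]; exact hdiam0, ?_⟩
    rw [card_ballW w x D, h4]
  tfae_have 2 → 3
  | h2 => by
    intro A hAd hAc
    have h0 := h2 0
    have hpos : 1 ≤ AstarW w n D := by
      rw [← h0.2]
      exact Finset.card_pos.mpr ⟨0, mem_self_ballW w 0 D⟩
    have hAne : A.Nonempty := Finset.card_pos.mp (by omega)
    obtain ⟨a, ha⟩ := hAne
    have hsub : A ⊆ ballW w a D := subset_ballW w hAd ha
    have hcard : (ballW w a D).card ≤ A.card := le_of_eq ((h2 a).2.trans hAc.symm)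
    exact ⟨a, Finset.eq_of_subset_of_card_le hsub hcard⟩
  tfae_have 3 → 1
  | h3 => by
    obtain ⟨A, hAd, hAc⟩ := AstarW_attained w n D
    obtain ⟨x0, hx0⟩ := h3 A hAd hAc
    have hdiam0 : diamW w (ballW w (0 : Fin n → F) D) ≤ D := by
      rw [← diamW_ballW w x0 D, ← hx0]; exact hAd
    intro x
    exact hdiamlow x (by rw [diamW_ballW w x D]; exact hdiam0)
  tfae_finish
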